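/- Let {ξₙ}ₙ≥1 be a sequence of Bochner integrable functions from I = [0,a] into a Banach space V such that ‖ξₙ(τ)‖ ≤ q̂(τ) for each n ≥ 1 and almost all τ ∈ I, where q̂ ∈ L¹(I, ℝ⁺). Then the function ĝ(τ) = μ({ξₙ(τ) : n ≥ 1}) belongs to L¹(I, ℝ⁺) and satisfies μ({∫₀^τ ξₙ(t) dt : n ≥ 1}) ≤ 2 ∫₀^τ ĝ(t) dt for every τ ∈ I. -/

import Mathlib

open Metric Set MeasureTheory

/-- Hausdorff measure of noncompactness: infimum of ε > 0 such that B has a finite ε-net. -/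
noncomputable def hausdorffMNC {X : Type*} [MetricSpace X] (B : Set X) : ℝ :=
  sInf {ε : ℝ | 0 < ε ∧ ∃ F : Finset X, B ⊆ ⋃ x ∈ F, Metric.ball x ε}

namespace MNCAux

open Filter

variable {V : Type*} [NormedAddCommGroup V]


variable {V : Type*} [NormedAddCommGroup V]

/-- The defining set of radii. -/
def mncSet (B : Set V) : Set ℝ :=
  {ε : ℝ | 0 < ε ∧ ∃ F : Finset V, B ⊆ ⋃ x ∈ F, Metric.ball x ε}

lemma hausdorffMNC_eq (B : Set V) : hausdorffMNC B = sInf (mncSet B) := rfl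

lemma bddBelow_mncSet (B : Set V) : BddBelow (mncSet B) :=
  ⟨0, fun _ hε => hε.1.le⟩

lemma hMNC_nonneg (B : Set V) : 0 ≤ hausdorffMNC B :=
  Real.sInf_nonneg fun _ hε => hε.1.le

lemma hMNC_le {B : Set V} {r : ℝ} (hr : 0 < r) (F : Finset V)
    (h : B ⊆ ⋃ x ∈ F, Metric.ball x r) : hausdorffMNC B ≤ r :=
  csInf_le (bddBelow_mncSet B) ⟨hr, F, h⟩

/-- Radii of nets with centers from the countable family `D`. -/
def netRad (D : ℕ → V) (f : ℕ → V) : Set ℝ :=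
  {ε : ℝ | 0 < ε ∧ ∃ F : Finset ℕ, ∀ n, ∃ k ∈ F, dist (f n) (D k) < ε}

lemma bddBelow_netRad (D f : ℕ → V) : BddBelow (netRad D f) :=
  ⟨0, fun _ hε => hε.1.le⟩

lemma netRad_nonneg (D f : ℕ → V) : 0 ≤ sInf (netRad D f) :=
  Real.sInf_nonneg fun _ hε => hε.1.le

lemma netRad_upward {D f : ℕ → V} {ε ε' : ℝ} (h : ε ∈ netRad D f) (hle : ε ≤ ε') :
    ε' ∈ netRad D f := by
  obtain ⟨hpos, F, hF⟩ := h
  exact ⟨hpos.trans_le hle, F, fun n => by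
    obtain ⟨k, hk, hd⟩ := hF n; exact ⟨k, hk, hd.trans_le hle⟩⟩

lemma netRad_subset_mncSet (D f : ℕ → V) :
    netRad D f ⊆ mncSet {v : V | ∃ n, f n = v} := by
  classical
  rintro ε ⟨hpos, F, hF⟩
  refine ⟨hpos, F.image D, ?_⟩
  rintro v ⟨n, rfl⟩
  obtain ⟨k, hk, hd⟩ := hF n
  exact Set.mem_iUnion₂.2 ⟨D k, Finset.mem_image_of_mem D hk, Metric.mem_ball.2 hd⟩

lemma mncSet_to_netRad {D : ℕ → V} (hD : DenseRange D) {f : ℕ → V} {ε : ℝ}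
    (hε : ε ∈ mncSet {v : V | ∃ n, f n = v}) {δ : ℝ} (hδ : 0 < δ) :
    ε + δ ∈ netRad D f := by
  obtain ⟨hpos, F, hF⟩ := hε
  classical
  refine ⟨by linarith, F.image fun x => Classical.choose (hD.exists_dist_lt x hδ), fun n => ?_⟩
  have hmem : f n ∈ ⋃ x ∈ F, Metric.ball x ε := hF ⟨n, rfl⟩
  obtain ⟨x, hx, hball⟩ := Set.mem_iUnion₂.1 hmem
  refine ⟨Classical.choose (hD.exists_dist_lt x hδ), Finset.mem_image_of_mem _ hx, ?_⟩
  have h1 : dist x (D (Classical.choose (hD.exists_dist_lt x hδ))) < δ :=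
    Classical.choose_spec (hD.exists_dist_lt x hδ)
  calc dist (f n) (D (Classical.choose (hD.exists_dist_lt x hδ)))
      ≤ dist (f n) x + dist x (D _) := dist_triangle _ _ _
    _ < ε + δ := by have := Metric.mem_ball.1 hball; linarith

lemma hMNC_range_eq {D : ℕ → V} (hD : DenseRange D) (f : ℕ → V) :
    hausdorffMNC {v : V | ∃ n, f n = v} = sInf (netRad D f) := by
  rcases eq_empty_or_nonempty (netRad D f) with hne | hne
  · have hS : mncSet {v : V | ∃ n, f n = v} = ∅ := by
      by_contra h
      obtain ⟨ε, hε⟩ := nonempty_iff_ne_empty.2 h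
      have := mncSet_to_netRad hD hε one_pos
      rw [hne] at this; exact this
    rw [hausdorffMNC_eq, hS, hne]
  · refine le_antisymm (csInf_le_csInf (bddBelow_mncSet _) hne (netRad_subset_mncSet D f)) ?_
    have hSne : (mncSet {v : V | ∃ n, f n = v}).Nonempty :=
      hne.mono (netRad_subset_mncSet D f)
    refine le_csInf hSne fun ε hε => le_of_forall_pos_le_add fun δ hδ => ?_
    exact csInf_le (bddBelow_netRad D f) (mncSet_to_netRad hD hε hδ)


section Meas
variable [MeasurableSpace V] [BorelSpace V] [SecondCountableTopology V]

lemma measurableSet_mem_netRad (D : ℕ → V) (ξ' : ℕ → ℝ → V)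
    (hmeas : ∀ n, Measurable (ξ' n)) (q : ℝ) :
    MeasurableSet {t : ℝ | q ∈ netRad D fun n => ξ' n t} := by
  have h1 : {t : ℝ | q ∈ netRad D fun n => ξ' n t}
      = {t : ℝ | 0 < q} ∩ ⋃ F : Finset ℕ, ⋂ n, ⋃ k ∈ F, {t | dist (ξ' n t) (D k) < q} := by
    ext t
    simp only [netRad, mem_setOf_eq, mem_inter_iff, mem_iUnion, mem_iInter, exists_prop]
  rw [h1]
  refine (MeasurableSet.const _).inter (MeasurableSet.iUnion fun F => MeasurableSet.iInter
    fun n => MeasurableSet.biUnion (F : Set ℕ).to_countable fun k _ => ?_)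
  exact measurableSet_lt ((hmeas n).dist measurable_const) measurable_const

lemma measurable_sInf_netRad (D : ℕ → V) (ξ' : ℕ → ℝ → V)
    (hmeas : ∀ n, Measurable (ξ' n)) :
    Measurable fun t => sInf (netRad D fun n => ξ' n t) := by
  apply measurable_of_Iio
  intro r
  have key : ∀ t : ℝ, sInf (netRad D fun n => ξ' n t) < r ↔
      (∃ q : ℚ, (0 < (q:ℝ) ∧ (q:ℝ) < r) ∧ (q:ℝ) ∈ netRad D fun n => ξ' n t) ∨
      ((∀ q : ℚ, (q:ℝ) ∉ netRad D fun n => ξ' n t) ∧ 0 < r) := by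
    intro t
    constructor
    · intro h
      rcases eq_empty_or_nonempty (netRad D fun n => ξ' n t) with hne | hne
      · rw [hne, Real.sInf_empty] at h
        exact Or.inr ⟨fun q hq => by rw [hne] at hq; exact hq, h⟩
      · obtain ⟨ε, hε, hlt⟩ := exists_lt_of_csInf_lt hne h
        obtain ⟨q, hq1, hq2⟩ := exists_rat_btwn hlt
        exact Or.inl ⟨q, ⟨hε.1.trans hq1, hq2⟩, netRad_upward hε hq1.le⟩
    · rintro (⟨q, ⟨_, hqr⟩, hqm⟩ | ⟨hall, hr⟩)
      · exact lt_of_le_of_lt (csInf_le (bddBelow_netRad _ _) hqm) hqr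
      · have hempty : (netRad D fun n => ξ' n t) = ∅ := by
          rw [eq_empty_iff_forall_notMem]
          intro ε hε
          obtain ⟨q, hq⟩ := exists_rat_gt ε
          exact hall q (netRad_upward hε hq.le)
        rw [hempty, Real.sInf_empty]; exact hr
  have h2 : (fun t => sInf (netRad D fun n => ξ' n t)) ⁻¹' (Iio r) =
      (⋃ q : ℚ, {t : ℝ | 0 < (q:ℝ) ∧ (q:ℝ) < r} ∩ {t | (q:ℝ) ∈ netRad D fun n => ξ' n t}) ∪
      ((⋂ q : ℚ, {t | (q:ℝ) ∈ netRad D fun n => ξ' n t}ᶜ) ∩ {t : ℝ | 0 < r}) := by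
    ext t
    simp only [mem_preimage, mem_Iio, mem_union, mem_iUnion, mem_inter_iff, mem_setOf_eq,
      mem_iInter, mem_compl_iff]
    rw [key t]
  rw [h2]
  exact ((MeasurableSet.iUnion fun q : ℚ => (MeasurableSet.const _).inter
      (measurableSet_mem_netRad D ξ' hmeas (q:ℝ))).union
    ((MeasurableSet.iInter fun q : ℚ => (measurableSet_mem_netRad D ξ' hmeas (q:ℝ)).compl).inter
      (MeasurableSet.const _)))

end Meas

lemma measurable_sInfNat {P : ℝ → ℕ → Prop} (hP : ∀ K, MeasurableSet {t | P t K}) :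
    Measurable fun t => sInf {K | P t K} := by
  apply measurable_to_countable'
  intro K
  have hset : (fun t => sInf {K | P t K}) ⁻¹' {K} =
      ({t | P t K} ∪ ({t : ℝ | K = 0} ∩ ⋂ L, {t | P t L}ᶜ)) ∩
        ⋂ L ∈ Finset.range K, {t | P t L}ᶜ := by
    ext t
    simp only [mem_preimage, mem_singleton_iff, mem_inter_iff, mem_union, mem_iInter,
      mem_compl_iff, mem_setOf_eq, Finset.mem_range]
    constructor
    · rintro rfl
      refine ⟨?_, fun L hL => Nat.notMem_of_lt_sInf hL⟩
      rcases eq_empty_or_nonempty {K | P t K} with he | hne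
      · rw [he, Nat.sInf_empty]
        exact Or.inr ⟨rfl, fun L hL => (eq_empty_iff_forall_notMem.1 he L) hL⟩
      · exact Or.inl (Nat.sInf_mem hne)
    · rintro ⟨h1 | ⟨rfl, h0⟩, h2⟩
      · refine le_antisymm (Nat.sInf_le h1) ?_
        by_contra hlt
        push_neg at hlt
        exact h2 _ hlt (Nat.sInf_mem ⟨K, h1⟩)
      · have : {K | P t K} = ∅ := eq_empty_iff_forall_notMem.2 fun L hL => h0 L hL
        rw [this, Nat.sInf_empty]
  rw [hset]
  exact ((hP K).union ((MeasurableSet.const _).inter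
      (MeasurableSet.iInter fun L => (hP L).compl))).inter
    (Finset.measurableSet_biInter _ fun L _ => (hP L).compl)

section Net
variable (D : ℕ → V) (ξ' : ℕ → ℝ → V) (c : ℝ → ℝ)

/-- `PK t K`: the first `K` points of `D` contain a `c t`-net for `{ξ' n t}`. -/
def PK (t : ℝ) (K : ℕ) : Prop := ∀ n, ∃ k < K, dist (ξ' n t) (D k) < c t

noncomputable def Kfun (t : ℝ) : ℕ := sInf {K | PK D ξ' c t K}

noncomputable def jfun (n : ℕ) (t : ℝ) : ℕ :=
  sInf {k | k < Kfun D ξ' c t ∧ dist (ξ' n t) (D k) < c t}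

noncomputable def eta (n : ℕ) (t : ℝ) : V := D (jfun D ξ' c n t)

lemma eta_spec {t : ℝ} (h : ∃ K, PK D ξ' c t K) (n : ℕ) :
    jfun D ξ' c n t < Kfun D ξ' c t ∧ dist (ξ' n t) (eta D ξ' c n t) < c t := by
  have hK : PK D ξ' c t (Kfun D ξ' c t) := Nat.sInf_mem h
  obtain ⟨k, hk, hd⟩ := hK n
  have hmem := Nat.sInf_mem (⟨k, hk, hd⟩ :
    {k | k < Kfun D ξ' c t ∧ dist (ξ' n t) (D k) < c t}.Nonempty)
  exact ⟨hmem.1, hmem.2⟩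

section NetMeas
variable [MeasurableSpace V] [BorelSpace V] [SecondCountableTopology V]

lemma measurableSet_PK (hmeas : ∀ n, Measurable (ξ' n)) (hc : Measurable c) (K : ℕ) : MeasurableSet {t | PK D ξ' c t K} := by
  have : {t | PK D ξ' c t K} = ⋂ n, ⋃ k ∈ Finset.range K, {t | dist (ξ' n t) (D k) < c t} := by
    ext t
    simp only [PK, mem_setOf_eq, mem_iInter, mem_iUnion, Finset.mem_range, exists_prop]
  rw [this]
  exact MeasurableSet.iInter fun n => Finset.measurableSet_biUnion _ fun k _ =>
    measurableSet_lt ((hmeas n).dist measurable_const) hc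

lemma measurable_Kfun (hmeas : ∀ n, Measurable (ξ' n)) (hc : Measurable c) : Measurable (Kfun D ξ' c) :=
  measurable_sInfNat fun K => measurableSet_PK D ξ' c hmeas hc K

lemma measurable_jfun (hmeas : ∀ n, Measurable (ξ' n)) (hc : Measurable c) (n : ℕ) : Measurable (jfun D ξ' c n) := by
  apply measurable_sInfNat
  intro k
  have : {t | k < Kfun D ξ' c t ∧ dist (ξ' n t) (D k) < c t} =
      (Kfun D ξ' c) ⁻¹' {K | k < K} ∩ {t | dist (ξ' n t) (D k) < c t} := rfl
  rw [this]
  exact ((measurable_Kfun D ξ' c hmeas hc) (MeasurableSet.of_discrete (s := {K | k < K}))).inter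
    (measurableSet_lt ((hmeas n).dist measurable_const) hc)

lemma measurable_eta (hmeas : ∀ n, Measurable (ξ' n)) (hc : Measurable c) (n : ℕ) : Measurable (eta D ξ' c n) :=
  measurable_from_top.comp (measurable_jfun D ξ' c hmeas hc n)

end NetMeas
end Net

section Key
variable [NormedSpace ℝ V] [CompleteSpace V]
  [SecondCountableTopology V] [MeasurableSpace V] [BorelSpace V]

lemma netRad_nonempty {D : ℕ → V} (hD : DenseRange D) {ξg : ℕ → V} {M : ℝ}
    (hM : ∀ n, ‖ξg n‖ ≤ M) : (netRad D ξg).Nonempty := by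
  obtain ⟨k0, hk0⟩ := hD.exists_dist_lt 0 one_pos
  have hM0 : 0 ≤ M := le_trans (norm_nonneg _) (hM 0)
  refine ⟨M + 1, by linarith, {k0}, fun n => ⟨k0, Finset.mem_singleton_self k0, ?_⟩⟩
  calc dist (ξg n) (D k0) ≤ dist (ξg n) 0 + dist 0 (D k0) := dist_triangle _ _ _
    _ < M + 1 := by rw [dist_zero_right]; have := hM n; linarith

lemma exists_PK {D : ℕ → V} {ξ' : ℕ → ℝ → V} {c : ℝ → ℝ} {t : ℝ}
    (hne : (netRad D fun n => ξ' n t).Nonempty)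
    (hlt : sInf (netRad D fun n => ξ' n t) < c t) : ∃ K, PK D ξ' c t K := by
  obtain ⟨ε, hε, hεlt⟩ := exists_lt_of_csInf_lt hne hlt
  obtain ⟨_, F, hF⟩ := hε
  refine ⟨F.sup id + 1, fun n => ?_⟩
  obtain ⟨k, hk, hd⟩ := hF n
  exact ⟨k, Nat.lt_succ_of_le (Finset.le_sup (f := id) hk), hd.trans hεlt⟩

lemma jfun_lt (D : ℕ → V) (ξ' : ℕ → ℝ → V) (c : ℝ → ℝ) (t : ℝ) (n : ℕ) :
    jfun D ξ' c n t < Kfun D ξ' c t + 1 := by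
  rcases eq_empty_or_nonempty {k | k < Kfun D ξ' c t ∧ dist (ξ' n t) (D k) < c t} with he | hne
  · rw [jfun, he, Nat.sInf_empty]; exact Nat.succ_pos _
  · exact Nat.lt_succ_of_lt (Nat.sInf_mem hne).1

lemma key_ineq (D : ℕ → V) (hD : DenseRange D) (ξ' : ℕ → ℝ → V)
    (hmeas : ∀ n, Measurable (ξ' n)) (τ : ℝ) (hτ : 0 ≤ τ) (qhat : ℝ → ℝ)
    (hq : IntegrableOn qhat (Ioc 0 τ))
    (hbound : ∀ᵐ t ∂(volume.restrict (Ioc 0 τ)), ∀ n, ‖ξ' n t‖ ≤ qhat t)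
    (hξ'int : ∀ n, IntegrableOn (ξ' n) (Ioc 0 τ))
    (hgint : IntegrableOn (fun t => sInf (netRad D fun n => ξ' n t)) (Ioc 0 τ)) :
    hausdorffMNC {v : V | ∃ n : ℕ, (∫ t in Ioc (0:ℝ) τ, ξ' n t) = v} ≤
      ∫ t in Ioc (0:ℝ) τ, sInf (netRad D fun n => ξ' n t) := by
  classical
  set g : ℝ → ℝ := fun t => sInf (netRad D fun n => ξ' n t) with hgdef
  set G : ℝ := ∫ t in Ioc (0:ℝ) τ, g t with hGdef
  have hGnn : 0 ≤ G := setIntegral_nonneg measurableSet_Ioc fun t _ => netRad_nonneg D _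
  have hgmeas : Measurable g := measurable_sInf_netRad D ξ' hmeas
  refine le_of_forall_pos_le_add fun ε hε => ?_
  set ε' : ℝ := ε / (τ + 3) with hε'def
  have hτ3 : 0 < τ + 3 := by linarith
  have hε' : 0 < ε' := div_pos hε hτ3
  set c : ℝ → ℝ := fun t => g t + ε' with hcdef
  have hcmeas : Measurable c := hgmeas.add_const ε'
  -- a.e. existence of finite nets among the first K points of D
  have hPKae : ∀ᵐ t ∂(volume.restrict (Ioc 0 τ)), ∃ K, PK D ξ' c t K := by
    refine hbound.mono fun t ht => ?_
    have hne : (netRad D fun n => ξ' n t).Nonempty := netRad_nonempty hD ht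
    refine exists_PK hne ?_
    have hc' : c t = g t + ε' := rfl
    rw [hc']
    have : sInf (netRad D fun n => ξ' n t) = g t := rfl
    linarith
  -- dominating function
  set w : ℝ → ℝ := fun t => qhat t + g t + ε' with hwdef
  have hwint : IntegrableOn w (Ioc 0 τ) := by
    refine (hq.add hgint).add ?_
    exact integrableOn_const measure_Ioc_lt_top.ne
  have hconstint : IntegrableOn (fun _ : ℝ => ε') (Ioc 0 τ) :=
    integrableOn_const measure_Ioc_lt_top.ne
  -- a.e. bounds for eta
  have haedist : ∀ᵐ t ∂(volume.restrict (Ioc 0 τ)),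
      ∀ n, dist (ξ' n t) (eta D ξ' c n t) < c t :=
    hPKae.mono fun t ht n => (eta_spec D ξ' c ht n).2
  have haeeta : ∀ᵐ t ∂(volume.restrict (Ioc 0 τ)), ∀ n, ‖eta D ξ' c n t‖ ≤ w t := by
    refine hbound.mp (haedist.mono fun t ht hb n => ?_)
    have h1 := dist_triangle (eta D ξ' c n t) (ξ' n t) 0
    rw [dist_zero_right, dist_zero_right, dist_comm (eta D ξ' c n t) (ξ' n t)] at h1
    have hc' : c t = g t + ε' := rfl
    have hw' : w t = qhat t + g t + ε' := rfl
    linarith [ht n, hb n]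
  have hetaint : ∀ n, IntegrableOn (eta D ξ' c n) (Ioc 0 τ) := fun n =>
    Integrable.mono' hwint
      ((measurable_eta D ξ' c hmeas hcmeas n).aestronglyMeasurable)
      (haeeta.mono fun t ht => ht n)
  -- step: difference bound
  have hvol : (volume (Ioc (0:ℝ) τ)).toReal = τ := by
    rw [Real.volume_Ioc, sub_zero, ENNReal.toReal_ofReal hτ]
  have hgε'int : IntegrableOn (fun t => g t + ε') (Ioc 0 τ) := hgint.add hconstint
  have hintc : (∫ t in Ioc (0:ℝ) τ, (g t + ε')) = G + ε' * τ := by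
    rw [integral_add hgint hconstint, setIntegral_const, smul_eq_mul, measureReal_def, hvol, mul_comm]
  have hdiff : ∀ n, ‖(∫ t in Ioc (0:ℝ) τ, ξ' n t) - ∫ t in Ioc (0:ℝ) τ, eta D ξ' c n t‖
      ≤ G + ε' * τ := by
    intro n
    rw [← integral_sub (hξ'int n) (hetaint n), ← hintc]
    refine norm_integral_le_of_norm_le hgε'int (haedist.mono fun t ht => ?_)
    have hc' : c t = g t + ε' := rfl
    rw [← dist_eq_norm]
    linarith [ht n]
  -- the exceptional sets
  set B : ℕ → Set ℝ := fun K => Ioc 0 τ ∩ {t | K < Kfun D ξ' c t} with hBdef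
  have hBmeas : ∀ K, MeasurableSet (B K) := fun K =>
    measurableSet_Ioc.inter ((measurable_Kfun D ξ' c hmeas hcmeas)
      (MeasurableSet.of_discrete (s := {m : ℕ | K < m})))
  have hBanti : Antitone B := fun K K' hKK' =>
    inter_subset_inter_right _ fun t ht => lt_of_le_of_lt hKK' ht
  have hBinter : (⋂ K, B K) = ∅ := by
    rw [eq_empty_iff_forall_notMem]
    intro t ht
    have h := (mem_iInter.1 ht (Kfun D ξ' c t)).2
    simp only [mem_setOf_eq] at h
    exact lt_irrefl _ h
  have htend : Tendsto (fun K => ∫ t in B K, w t) atTop (nhds 0) := by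
    have := tendsto_setIntegral_of_antitone (f := w) (μ := volume) hBmeas hBanti
      ⟨0, hwint.mono_set inter_subset_left⟩
    rwa [hBinter, Measure.restrict_empty, integral_zero_measure] at this
  obtain ⟨K0, hK0⟩ := (htend.eventually_lt_const hε').exists
  -- the main part of the domain
  set A : Set ℝ := Ioc 0 τ ∩ {t | Kfun D ξ' c t ≤ K0} with hAdef
  have hAmeas : MeasurableSet A :=
    measurableSet_Ioc.inter ((measurable_Kfun D ξ' c hmeas hcmeas)
      (MeasurableSet.of_discrete (s := {m : ℕ | m ≤ K0})))
  have hAsub : A ⊆ Ioc 0 τ := inter_subset_left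
  have hABdisj : Disjoint A (B K0) := by
    rw [Set.disjoint_left]
    rintro t ⟨_, h1⟩ ⟨_, h2⟩
    simp only [mem_setOf_eq] at h1 h2
    omega
  have hABunion : A ∪ B K0 = Ioc 0 τ := by
    ext t
    simp only [hAdef, hBdef, mem_union, mem_inter_iff, mem_setOf_eq]
    constructor
    · rintro (⟨h, _⟩ | ⟨h, _⟩) <;> exact h
    · intro h
      rcases le_or_gt (Kfun D ξ' c t) K0 with hk | hk
      · exact Or.inl ⟨h, hk⟩
      · exact Or.inr ⟨h, hk⟩
  have hsplit : ∀ n, (∫ t in Ioc (0:ℝ) τ, eta D ξ' c n t) =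
      (∫ t in A, eta D ξ' c n t) + ∫ t in B K0, eta D ξ' c n t := by
    intro n
    rw [← setIntegral_union hABdisj (hBmeas K0)
      ((hetaint n).mono_set hAsub) ((hetaint n).mono_set inter_subset_left), hABunion]
  -- the compact set of candidate integrals
  set K1 : ℕ := K0 + 1 with hK1def
  set CC : Set V := (fun cc : Fin K1 → ℝ => ∑ k : Fin K1, cc k • D (k : ℕ)) ''
    (Set.univ.pi fun _ => Icc 0 τ) with hCCdef
  have hCCcompact : IsCompact CC :=
    (isCompact_univ_pi fun _ => isCompact_Icc).image
      (continuous_finset_sum _ fun k _ => (continuous_apply k).smul continuous_const)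
  have hrepr : ∀ n, (∫ t in A, eta D ξ' c n t) ∈ CC := by
    intro n
    have hjlt : ∀ t ∈ A, jfun D ξ' c n t < K1 := fun t ht =>
      lt_of_lt_of_le (jfun_lt D ξ' c t n) (Nat.succ_le_succ ht.2)
    have hdecomp : A = ⋃ k ∈ Finset.range K1, (A ∩ jfun D ξ' c n ⁻¹' {k}) := by
      ext t
      simp only [mem_iUnion, Finset.mem_range, mem_inter_iff, mem_preimage,
        mem_singleton_iff, exists_prop]
      constructor
      · intro ht
        exact ⟨jfun D ξ' c n t, hjlt t ht, ht, rfl⟩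
      · rintro ⟨k, _, ht, _⟩; exact ht
    have hksets : ∀ k ∈ Finset.range K1, MeasurableSet (A ∩ jfun D ξ' c n ⁻¹' {k}) :=
      fun k _ => hAmeas.inter ((measurable_jfun D ξ' c hmeas hcmeas n)
        (MeasurableSet.of_discrete (s := {k})))
    have hdisj : (↑(Finset.range K1) : Set ℕ).Pairwise
        (Function.onFun Disjoint fun k => A ∩ jfun D ξ' c n ⁻¹' {k}) := by
      intro k _ k' _ hkk'
      simp only [Function.onFun]
      rw [Set.disjoint_left]
      rintro t ⟨_, h1⟩ ⟨_, h2⟩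
      rw [mem_preimage, mem_singleton_iff] at h1 h2
      exact hkk' (h1 ▸ h2 ▸ rfl)
    have hints : ∀ k ∈ Finset.range K1, IntegrableOn (eta D ξ' c n) (A ∩ jfun D ξ' c n ⁻¹' {k}) :=
      fun k _ => (hetaint n).mono_set (inter_subset_left.trans hAsub)
    have h1 : (∫ t in A, eta D ξ' c n t) = ∑ k ∈ Finset.range K1,
        ∫ t in A ∩ jfun D ξ' c n ⁻¹' {k}, eta D ξ' c n t := by
      conv_lhs => rw [hdecomp]
      exact integral_biUnion_finset _ hksets hdisj hints
    have h2 : ∀ k ∈ Finset.range K1, (∫ t in A ∩ jfun D ξ' c n ⁻¹' {k}, eta D ξ' c n t) =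
        (volume (A ∩ jfun D ξ' c n ⁻¹' {k})).toReal • D k := by
      intro k hk
      rw [setIntegral_congr_fun (hksets k hk) (g := fun _ => D k)
        (fun t ht => by simp only [eta]; rw [ht.2]), setIntegral_const, measureReal_def]
    rw [h1, Finset.sum_congr rfl h2]
    refine ⟨fun k : Fin K1 => (volume (A ∩ jfun D ξ' c n ⁻¹' {(k : ℕ)})).toReal, ?_, ?_⟩
    · intro k _
      refine ⟨ENNReal.toReal_nonneg, ?_⟩
      refine ENNReal.toReal_le_of_le_ofReal hτ ?_
      calc volume (A ∩ jfun D ξ' c n ⁻¹' {(k : ℕ)}) ≤ volume (Ioc (0:ℝ) τ) :=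
        measure_mono (inter_subset_left.trans hAsub)
      _ = ENNReal.ofReal τ := by rw [Real.volume_Ioc, sub_zero]
    · rw [← Fin.sum_univ_eq_sum_range (fun k => (volume (A ∩ jfun D ξ' c n ⁻¹' {k})).toReal • D k) K1]
  -- finite net for CC
  obtain ⟨t0, ht0fin, ht0cov⟩ := Metric.totallyBounded_iff.1 hCCcompact.totallyBounded ε' hε'
  set F : Finset V := ht0fin.toFinset with hFdef
  -- final covering
  have hr : (0:ℝ) < G + ε' * τ + 3 * ε' := by nlinarith
  have hcover : {v : V | ∃ n : ℕ, (∫ t in Ioc (0:ℝ) τ, ξ' n t) = v} ⊆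
      ⋃ y ∈ F, Metric.ball y (G + ε' * τ + 3 * ε') := by
    rintro v ⟨n, rfl⟩
    obtain ⟨y, hy, hball⟩ := mem_iUnion₂.1 (ht0cov (hrepr n))
    refine mem_iUnion₂.2 ⟨y, ht0fin.mem_toFinset.2 hy, ?_⟩
    rw [Metric.mem_ball] at hball ⊢
    have hBn : ‖∫ t in B K0, eta D ξ' c n t‖ ≤ ∫ t in B K0, w t :=
      norm_integral_le_of_norm_le (hwint.mono_set inter_subset_left)
        ((ae_restrict_of_ae_restrict_of_subset inter_subset_left haeeta).mono fun t ht => ht n)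
    have htri : dist (∫ t in Ioc (0:ℝ) τ, ξ' n t) y ≤
        dist (∫ t in Ioc (0:ℝ) τ, ξ' n t) (∫ t in A, eta D ξ' c n t) +
        dist (∫ t in A, eta D ξ' c n t) y := dist_triangle _ _ _
    have hd1 : dist (∫ t in Ioc (0:ℝ) τ, ξ' n t) (∫ t in A, eta D ξ' c n t) ≤
        (G + ε' * τ) + ∫ t in B K0, w t := by
      rw [dist_eq_norm]
      have : (∫ t in Ioc (0:ℝ) τ, ξ' n t) - (∫ t in A, eta D ξ' c n t) =
          ((∫ t in Ioc (0:ℝ) τ, ξ' n t) - ∫ t in Ioc (0:ℝ) τ, eta D ξ' c n t) +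
          ∫ t in B K0, eta D ξ' c n t := by
        rw [hsplit n]; abel
      rw [this]
      exact (norm_add_le _ _).trans (add_le_add (hdiff n) hBn)
    linarith
  have := hMNC_le hr F hcover
  have h3 : ε' * (τ + 3) = ε := div_mul_cancel₀ ε (ne_of_gt hτ3)
  calc hausdorffMNC {v : V | ∃ n : ℕ, (∫ t in Ioc (0:ℝ) τ, ξ' n t) = v}
      ≤ G + ε' * τ + 3 * ε' := this
    _ = G + ε' * (τ + 3) := by ring
    _ = G + ε := by rw [h3]
end Key

end MNCAux

open MNCAux in
theorem hausdorffMNC_integral_seq_le {V : Type*} [NormedAddCommGroup V]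
    [NormedSpace ℝ V] [CompleteSpace V] [SecondCountableTopology V]
    [MeasurableSpace V] [BorelSpace V]
    (a : ℝ) (ha : 0 < a) (ξ : ℕ → ℝ → V) (qhat : ℝ → ℝ)
    (hq : IntegrableOn qhat (Icc 0 a)) (hqpos : ∀ τ ∈ Icc 0 a, 0 ≤ qhat τ)
    (hξint : ∀ n, IntegrableOn (ξ n) (Icc 0 a))
    (hbound : ∀ n, ∀ᵐ τ ∂(volume.restrict (Icc 0 a)), ‖ξ n τ‖ ≤ qhat τ) :
    IntegrableOn (fun τ => hausdorffMNC {v : V | ∃ n : ℕ, ξ n τ = v}) (Icc 0 a) ∧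
      ∀ τ ∈ Icc 0 a,
        hausdorffMNC {v : V | ∃ n : ℕ, (∫ t in (0:ℝ)..τ, ξ n t) = v} ≤
          2 * ∫ t in (0:ℝ)..τ, hausdorffMNC {v : V | ∃ n : ℕ, ξ n t = v} := by
  haveI : Nonempty V := ⟨0⟩
  set D : ℕ → V := TopologicalSpace.denseSeq V with hDdef
  have hD : DenseRange D := TopologicalSpace.denseRange_denseSeq V
  set ξ' : ℕ → ℝ → V := fun n => ((hξint n).1).mk (ξ n) with hξ'def
  have hmeas : ∀ n, Measurable (ξ' n) := fun n =>
    ((hξint n).1).stronglyMeasurable_mk.measurable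
  have hae : ∀ n, ξ n =ᵐ[volume.restrict (Icc 0 a)] ξ' n := fun n => ((hξint n).1).ae_eq_mk
  have haeall : ∀ᵐ t ∂(volume.restrict (Icc (0:ℝ) a)), ∀ n, ξ n t = ξ' n t := ae_all_iff.2 hae
  have hballae : ∀ᵐ t ∂(volume.restrict (Icc (0:ℝ) a)), ∀ n, ‖ξ n t‖ ≤ qhat t :=
    ae_all_iff.2 hbound
  set g : ℝ → ℝ := fun t => sInf (netRad D fun n => ξ' n t) with hgdef
  have hgmeas : Measurable g := measurable_sInf_netRad D ξ' hmeas
  set ghat : ℝ → ℝ := fun t => hausdorffMNC {v : V | ∃ n, ξ n t = v} with hghatdef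
  have hg_eq : ∀ᵐ t ∂(volume.restrict (Icc (0:ℝ) a)), ghat t = g t := by
    refine haeall.mono fun t ht => ?_
    have hsets : {v : V | ∃ n, ξ n t = v} = {v : V | ∃ n, ξ' n t = v} := by
      ext v; exact exists_congr fun n => by rw [ht n]
    show hausdorffMNC {v : V | ∃ n, ξ n t = v} = sInf (netRad D fun n => ξ' n t)
    rw [hsets, hMNC_range_eq hD (fun n => ξ' n t)]
  have hghat_nonneg : ∀ t, 0 ≤ ghat t := fun t => hMNC_nonneg _
  have hghat_le : ∀ᵐ t ∂(volume.restrict (Icc (0:ℝ) a)), ‖ghat t‖ ≤ qhat t := by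
    refine hballae.mono fun t ht => ?_
    rw [Real.norm_of_nonneg (hghat_nonneg t)]
    refine le_of_forall_pos_le_add fun δ hδ => ?_
    have h0 : 0 ≤ qhat t := le_trans (norm_nonneg _) (ht 0)
    refine hMNC_le (by linarith) {(0:V)} ?_
    rintro v ⟨n, rfl⟩
    refine mem_iUnion₂.2 ⟨0, Finset.mem_singleton_self 0, ?_⟩
    rw [Metric.mem_ball, dist_zero_right]
    linarith [ht n]
  have hg_eq' : ghat =ᵐ[volume.restrict (Icc (0:ℝ) a)] g := hg_eq
  have hmainint : IntegrableOn ghat (Icc 0 a) :=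
    Integrable.mono' hq
      ((hgmeas.stronglyMeasurable.aestronglyMeasurable).congr hg_eq'.symm) hghat_le
  refine ⟨hmainint, ?_⟩
  intro τ hτ
  obtain ⟨hτ0, hτa⟩ := hτ
  have hsub : Ioc (0:ℝ) τ ⊆ Icc 0 a := fun t ht => ⟨le_of_lt ht.1, ht.2.trans hτa⟩
  have hres : ∀ {p : ℝ → Prop}, (∀ᵐ t ∂(volume.restrict (Icc (0:ℝ) a)), p t) →
      (∀ᵐ t ∂(volume.restrict (Ioc (0:ℝ) τ)), p t) := fun h =>
    ae_restrict_of_ae_restrict_of_subset hsub h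
  have hLHS : {v : V | ∃ n : ℕ, (∫ t in (0:ℝ)..τ, ξ n t) = v} =
      {v : V | ∃ n : ℕ, (∫ t in Ioc (0:ℝ) τ, ξ' n t) = v} := by
    have hint : ∀ n, (∫ t in (0:ℝ)..τ, ξ n t) = ∫ t in Ioc (0:ℝ) τ, ξ' n t := fun n => by
      rw [intervalIntegral.integral_of_le hτ0]
      exact integral_congr_ae (hres (hae n))
    ext v
    exact exists_congr fun n => by rw [hint n]
  have hRHS : (∫ t in (0:ℝ)..τ, ghat t) = ∫ t in Ioc (0:ℝ) τ, g t := by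
    rw [intervalIntegral.integral_of_le hτ0]
    exact integral_congr_ae (hres hg_eq)
  have hbkey : ∀ᵐ t ∂(volume.restrict (Ioc (0:ℝ) τ)), ∀ n, ‖ξ' n t‖ ≤ qhat t := by
    refine (hres (haeall.and hballae)).mono fun t ⟨h1, h2⟩ n => ?_
    rw [← h1 n]; exact h2 n
  have hξ'Icc : ∀ n, IntegrableOn (ξ' n) (Icc 0 a) := fun n => (hξint n).congr (hae n)
  have hgIcc : IntegrableOn g (Icc 0 a) := hmainint.congr hg_eq'
  have hkey := key_ineq D hD ξ' hmeas τ hτ0 qhat (hq.mono_set hsub) hbkey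
    (fun n => (hξ'Icc n).mono_set hsub) (hgIcc.mono_set hsub)
  have hGnn : 0 ≤ ∫ t in Ioc (0:ℝ) τ, g t :=
    setIntegral_nonneg measurableSet_Ioc fun t _ => netRad_nonneg D _
  rw [hLHS, hRHS]
  linarith
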